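/- Let S_n be a nonempty finite set of PMFs on X^n × Y^n and Q_n = (1/|S_n|) ∑_{P ∈ S_n} P their uniform mixture. Then for any ρ ∈ [0,1], E_n^{(1)}(ρ, Q_n) ≤ (1/n) log |S_n| + max_{P ∈ S_n} E_n^{(1)}(ρ, P), where E_n^{(1)}(ρ, R) = (1/n) log ∑_{y^n} (∑_{x^n} R(x^n, y^n)^{1/(1+ρ)})^{1+ρ}. -/

import Mathlib

open Finset

private lemma real_rpow_add_le {x y p : ℝ} (hx : 0 ≤ x) (hy : 0 ≤ y)
    (hp0 : 0 ≤ p) (hp1 : p ≤ 1) : (x + y) ^ p ≤ x ^ p + y ^ p := by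
  have h := NNReal.rpow_add_le_add_rpow (⟨x, hx⟩ : NNReal) (⟨y, hy⟩ : NNReal) hp0 hp1
  have := NNReal.coe_le_coe.2 h
  exact this

private lemma real_rpow_sum_le_sum_rpow {ι : Type*} (s : Finset ι) (f : ι → ℝ)
    (hf : ∀ i ∈ s, 0 ≤ f i) {p : ℝ} (hp0 : 0 < p) (hp1 : p ≤ 1) :
    (∑ i ∈ s, f i) ^ p ≤ ∑ i ∈ s, f i ^ p := by
  induction s using Finset.cons_induction with
  | empty => simp [Real.zero_rpow hp0.ne']
  | cons a s ha ih =>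
    rw [Finset.sum_cons, Finset.sum_cons]
    have hfa : 0 ≤ f a := hf a (Finset.mem_cons_self a s)
    have hfs : 0 ≤ ∑ i ∈ s, f i :=
      Finset.sum_nonneg fun i hi => hf i (Finset.mem_cons_of_mem hi)
    calc (f a + ∑ i ∈ s, f i) ^ p ≤ f a ^ p + (∑ i ∈ s, f i) ^ p :=
          real_rpow_add_le hfa hfs hp0.le hp1
      _ ≤ f a ^ p + ∑ i ∈ s, f i ^ p := by
          gcongr
          exact ih fun i hi => hf i (Finset.mem_cons_of_mem hi)

/-- Gallager-function bound for a uniform mixture: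
`E_n^{(1)}(ρ, Q_n) ≤ (1/n) log |S_n| + max_{P ∈ S_n} E_n^{(1)}(ρ, P)`. -/
theorem mixture_gallager_E1 {X Y : Type*} [Fintype X] [Fintype Y]
    [Nonempty X] [Nonempty Y] (n : ℕ) (hn : 0 < n)
    (S : Finset (((Fin n → X) × (Fin n → Y)) → ℝ)) (hS : S.Nonempty)
    (hpmf : ∀ P ∈ S, (∀ a, 0 ≤ P a) ∧ ∑ a, P a = 1)
    (ρ : ℝ) (hρ0 : 0 ≤ ρ) (hρ1 : ρ ≤ 1) :
    (1 / n : ℝ) * Real.log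
        (∑ y : Fin n → Y, (∑ x : Fin n → X,
          ((S.card : ℝ)⁻¹ * ∑ P ∈ S, P (x, y)) ^ (1 / (1 + ρ))) ^ (1 + ρ)) ≤
      (1 / n : ℝ) * Real.log S.card +
        S.sup' hS (fun P => (1 / n : ℝ) * Real.log
          (∑ y : Fin n → Y, (∑ x : Fin n → X, P (x, y) ^ (1 / (1 + ρ))) ^ (1 + ρ))) := by
  have hcard : 0 < S.card := Finset.card_pos.2 hS
  set N : ℝ := (S.card : ℝ) with hN
  have hN1 : 1 ≤ N := by rw [hN]; exact Nat.one_le_cast.mpr hcard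
  have hNpos : 0 < N := lt_of_lt_of_le one_pos hN1
  set c : ℝ := N⁻¹ with hc
  have hcpos : 0 < c := inv_pos.2 hNpos
  have hp1 : (0:ℝ) < 1 + ρ := by linarith
  have hp1' : (1:ℝ) ≤ 1 + ρ := by linarith
  set r : ℝ := 1 / (1 + ρ) with hr
  have hr0 : 0 < r := by positivity
  have hr1 : r ≤ 1 := by
    rw [hr, div_le_one hp1]; linarith
  have hrp : r * (1 + ρ) = 1 := by
    rw [hr]; field_simp
  -- Notation
  set F : (((Fin n → X) × (Fin n → Y)) → ℝ) → ℝ :=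
    fun P => ∑ y : Fin n → Y, (∑ x : Fin n → X, P (x, y) ^ r) ^ (1 + ρ) with hF
  set Q : ((Fin n → X) × (Fin n → Y)) → ℝ := fun a => c * ∑ P ∈ S, P a with hQ
  have hQnn : ∀ a, 0 ≤ Q a := fun a =>
    mul_nonneg hcpos.le (Finset.sum_nonneg fun P hP => (hpmf P hP).1 a)
  have hQsum : ∑ a, Q a = 1 := by
    rw [hQ]
    simp only [← Finset.mul_sum]
    rw [Finset.sum_comm]
    have h1 : ∑ P ∈ S, ∑ a, P a = (S.card : ℝ) := by
      rw [Finset.sum_congr rfl fun P hP => (hpmf P hP).2]; simp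
    rw [h1, hc, hN]
    field_simp
  -- A P y := inner sum
  set A : (((Fin n → X) × (Fin n → Y)) → ℝ) → (Fin n → Y) → ℝ :=
    fun P y => ∑ x : Fin n → X, P (x, y) ^ r with hA
  have hAnn : ∀ (P : ((Fin n → X) × (Fin n → Y)) → ℝ), (∀ a, 0 ≤ P a) → ∀ y, 0 ≤ A P y :=
    fun P hPnn y => Finset.sum_nonneg fun x _ => Real.rpow_nonneg (hPnn _) r
  -- sup
  obtain ⟨P₀, hP₀S, hP₀⟩ := Finset.exists_mem_eq_sup' hS F
  set M : ℝ := S.sup' hS F with hM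
  have hFM : ∀ P ∈ S, F P ≤ M := fun P hP => Finset.le_sup' F hP
  -- key inequality: F Q ≤ N ^ ρ * M
  have key : F Q ≤ N ^ ρ * M := by
    have step1 : ∀ y, A Q y ≤ c ^ r * ∑ P ∈ S, A P y := by
      intro y
      have h1 : A Q y ≤ ∑ x : Fin n → X, c ^ r * ∑ P ∈ S, P (x, y) ^ r := by
        apply Finset.sum_le_sum
        intro x _
        have hsnn : 0 ≤ ∑ P ∈ S, P (x, y) :=
          Finset.sum_nonneg fun P hP => (hpmf P hP).1 _
        calc Q (x, y) ^ r = c ^ r * (∑ P ∈ S, P (x, y)) ^ r := by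
              rw [hQ]; exact Real.mul_rpow hcpos.le hsnn
          _ ≤ c ^ r * ∑ P ∈ S, P (x, y) ^ r := by
              apply mul_le_mul_of_nonneg_left _ (Real.rpow_nonneg hcpos.le r)
              exact real_rpow_sum_le_sum_rpow S _ (fun P hP => (hpmf P hP).1 _) hr0 hr1
      calc A Q y ≤ ∑ x : Fin n → X, c ^ r * ∑ P ∈ S, P (x, y) ^ r := h1
        _ = c ^ r * ∑ P ∈ S, A P y := by
            rw [← Finset.mul_sum, Finset.sum_comm]
    have hcr : c ^ r = N ^ (1 - r) * c := by
      rw [hc, ← Real.rpow_neg_one N, ← Real.rpow_mul hNpos.le, ← Real.rpow_add hNpos]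
      congr 1
      ring
    have step2 : ∀ y, (A Q y) ^ (1 + ρ) ≤ N ^ ρ * ∑ P ∈ S, c * (A P y) ^ (1 + ρ) := by
      intro y
      have hAQnn : 0 ≤ A Q y := hAnn Q hQnn y
      have hsum_nn : 0 ≤ ∑ P ∈ S, c * A P y :=
        Finset.sum_nonneg fun P hP => mul_nonneg hcpos.le (hAnn P (hpmf P hP).1 y)
      have e1 : c ^ r * ∑ P ∈ S, A P y = N ^ (1 - r) * ∑ P ∈ S, c * A P y := by
        rw [hcr, Finset.mul_sum, Finset.mul_sum]
        exact Finset.sum_congr rfl fun P _ => by ring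
      have h2 : (A Q y) ^ (1 + ρ) ≤ (N ^ (1 - r) * ∑ P ∈ S, c * A P y) ^ (1 + ρ) := by
        rw [← e1]
        exact Real.rpow_le_rpow hAQnn (step1 y) hp1.le
      have h3 : (N ^ (1 - r) * ∑ P ∈ S, c * A P y) ^ (1 + ρ)
          = N ^ ρ * (∑ P ∈ S, c * A P y) ^ (1 + ρ) := by
        rw [Real.mul_rpow (Real.rpow_nonneg hNpos.le _) hsum_nn,
          ← Real.rpow_mul hNpos.le]
        congr 2
        have : (1 - r) * (1 + ρ) = (1 + ρ) - r * (1 + ρ) := by ring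
        rw [this, hrp]; ring
      have h4 : (∑ P ∈ S, c * A P y) ^ (1 + ρ) ≤ ∑ P ∈ S, c * (A P y) ^ (1 + ρ) := by
        apply Real.rpow_arith_mean_le_arith_mean_rpow S (fun _ => c) (fun P => A P y)
          (fun _ _ => hcpos.le) _ (fun P hP => hAnn P (hpmf P hP).1 y) hp1'
        rw [Finset.sum_const, nsmul_eq_mul, hc, hN]
        field_simp
      calc (A Q y) ^ (1 + ρ) ≤ N ^ ρ * (∑ P ∈ S, c * A P y) ^ (1 + ρ) := by
            rw [← h3]; exact h2
        _ ≤ N ^ ρ * ∑ P ∈ S, c * (A P y) ^ (1 + ρ) := by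
            exact mul_le_mul_of_nonneg_left h4 (Real.rpow_nonneg hNpos.le ρ)
    calc F Q = ∑ y : Fin n → Y, (A Q y) ^ (1 + ρ) := rfl
      _ ≤ ∑ y : Fin n → Y, N ^ ρ * ∑ P ∈ S, c * (A P y) ^ (1 + ρ) :=
          Finset.sum_le_sum fun y _ => step2 y
      _ = N ^ ρ * ∑ P ∈ S, c * F P := by
          rw [← Finset.mul_sum]
          congr 1
          rw [Finset.sum_comm]
          exact Finset.sum_congr rfl fun P _ => by rw [← Finset.mul_sum]
      _ ≤ N ^ ρ * ∑ P ∈ S, c * M := by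
          apply mul_le_mul_of_nonneg_left _ (Real.rpow_nonneg hNpos.le ρ)
          exact Finset.sum_le_sum fun P hP =>
            mul_le_mul_of_nonneg_left (hFM P hP) hcpos.le
      _ = N ^ ρ * M := by
          rw [Finset.sum_const, nsmul_eq_mul]
          congr 1
          rw [hc, hN]
          field_simp
  -- positivity of F Q
  have hFQpos : 0 < F Q := by
    have hex : ∃ a : ((Fin n → X) × (Fin n → Y)), 0 < Q a := by
      by_contra h
      push_neg at h
      have : (∑ a, Q a) ≤ 0 := Finset.sum_nonpos fun a _ => h a
      rw [hQsum] at this; linarith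
    obtain ⟨⟨x₀, y₀⟩, hx₀⟩ := hex
    have h1 : 0 < A Q y₀ := by
      have := Finset.single_le_sum
        (f := fun x => Q (x, y₀) ^ r)
        (fun x _ => Real.rpow_nonneg (hQnn _) r) (Finset.mem_univ x₀)
      exact lt_of_lt_of_le (Real.rpow_pos_of_pos hx₀ r) this
    apply Finset.sum_pos' (fun y _ => Real.rpow_nonneg (hAnn Q hQnn y) _)
    exact ⟨y₀, Finset.mem_univ y₀, Real.rpow_pos_of_pos h1 _⟩
  have hMpos : 0 < M := by
    by_contra h
    push_neg at h
    have : N ^ ρ * M ≤ 0 := mul_nonpos_of_nonneg_of_nonpos (Real.rpow_nonneg hNpos.le ρ) h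
    linarith [lt_of_lt_of_le hFQpos key]
  -- take logs
  have hlog : Real.log (F Q) ≤ Real.log N + Real.log M := by
    calc Real.log (F Q) ≤ Real.log (N ^ ρ * M) := Real.log_le_log hFQpos key
      _ = ρ * Real.log N + Real.log M := by
          rw [Real.log_mul (Real.rpow_pos_of_pos hNpos ρ).ne' hMpos.ne',
            Real.log_rpow hNpos]
      _ ≤ Real.log N + Real.log M := by
          have hlogN : 0 ≤ Real.log N := Real.log_nonneg hN1
          nlinarith
  have hninv : (0:ℝ) ≤ 1 / n := by positivity
  have final : (1 / n : ℝ) * Real.log (F Q)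
      ≤ (1 / n : ℝ) * Real.log N + (1 / n : ℝ) * Real.log M := by
    rw [← mul_add]
    exact mul_le_mul_of_nonneg_left hlog hninv
  have hsup : (1 / n : ℝ) * Real.log M ≤
      S.sup' hS (fun P => (1 / n : ℝ) * Real.log (F P)) := by
    rw [hP₀]
    exact Finset.le_sup' (fun P => (1 / n : ℝ) * Real.log (F P)) hP₀S
  exact le_trans final (by linarith)
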